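/- Let m ≥ 1 and let c_1,…,c_m be odd integers with c_i ≥ 3 for all i and Σ_{i=1}^m c_i = m(2m+1). Let G be the m-cycle graph G(c_1,…,c_m) with center r and let the source be s = r. Then G admits a broadcast scheme from s completing within 2m rounds if and only if there exist a bijection α from {1,…,m} onto the even numbers {2,4,…,2m} and a bijection β from {1,…,m} onto the odd numbers {1,3,…,2m−1} such that α(i)+β(i) = c_i for all i ∈ {1,…,m}. -/

import Mathlib

/-- A broadcast scheme for `(G, s)`: inform times `τ` and parents `par`.
`τ s = 0`; every other vertex `v` has a parent adjacent to it informed strictly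
earlier, and a vertex informs at most one of its children per round. -/
def IsBroadcastScheme {V : Type*} (G : SimpleGraph V) (s : V)
    (τ : V → ℕ) (par : V → V) : Prop :=
  τ s = 0 ∧
  (∀ v, v ≠ s → G.Adj (par v) v ∧ τ (par v) < τ v) ∧
  ∀ u : V, Set.InjOn τ {v | v ≠ s ∧ par v = u}

def kCycleRel {k : ℕ} (c : Fin k → ℕ) :
    Option ((i : Fin k) × Fin (c i)) → Option ((i : Fin k) × Fin (c i)) → Prop
  | none, some ⟨i, j⟩ => (j : ℕ) = 0 ∨ (j : ℕ) = c i - 1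
  | some ⟨i, j⟩, some ⟨i', j'⟩ => i = i' ∧ (j' : ℕ) = (j : ℕ) + 1
  | _, _ => False

/-- The `k`-cycle graph `G(c₁, …, c_k)`: `k` cycles sharing the single center
vertex `none`, the `i`-th cycle having `c i` vertices besides the center
(vertex `⟨i, j⟩` encodes the `(j+1)`-st vertex of the `i`-th cycle). -/
def kCycleGraph {k : ℕ} (c : Fin k → ℕ) :
    SimpleGraph (Option ((i : Fin k) × Fin (c i))) :=
  SimpleGraph.fromRel (kCycleRel c)

section Aux


variable {k : ℕ} {c : Fin k → ℕ}

lemma adj_none_iff {i : Fin k} {j : Fin (c i)} :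
    (kCycleGraph c).Adj none (some ⟨i, j⟩) ↔ (j : ℕ) = 0 ∨ (j : ℕ) = c i - 1 := by
  simp [kCycleGraph, SimpleGraph.fromRel_adj, kCycleRel]

lemma adj_some_iff {i i' : Fin k} {j : Fin (c i)} {j' : Fin (c i')} :
    (kCycleGraph c).Adj (some ⟨i, j⟩) (some ⟨i', j'⟩) ↔
      (i = i' ∧ ((j' : ℕ) = (j : ℕ) + 1 ∨ (j : ℕ) = (j' : ℕ) + 1)) := by
  constructor
  · rintro ⟨hne, h | h⟩
    · exact ⟨h.1, Or.inl h.2⟩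
    · exact ⟨h.1.symm, Or.inr h.2⟩
  · rintro ⟨rfl, h | h⟩
    · exact ⟨by simp [Sigma.mk.inj_iff]; intro he; rw [Fin.ext_iff] at he; omega,
        Or.inl ⟨rfl, h⟩⟩
    · exact ⟨by simp [Sigma.mk.inj_iff]; intro he; rw [Fin.ext_iff] at he; omega,
        Or.inr ⟨rfl, h⟩⟩

lemma adj_none_some {i : Fin k} {j : Fin (c i)}
    (h : (kCycleGraph c).Adj none (some ⟨i, j⟩)) : (j : ℕ) = 0 ∨ (j : ℕ) = c i - 1 :=
  adj_none_iff.1 h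

lemma adj_some_none {i : Fin k} {j : Fin (c i)}
    (h : (kCycleGraph c).Adj (some ⟨i, j⟩) none) : (j : ℕ) = 0 ∨ (j : ℕ) = c i - 1 :=
  adj_none_iff.1 h.symm

lemma nbrs (hc3 : ∀ i, 3 ≤ c i) (x : (i : Fin k) × Fin (c i)) :
    ∃ A B : Option ((i : Fin k) × Fin (c i)),
      ∀ y, (kCycleGraph c).Adj (some x) y → y = A ∨ y = B := by
  obtain ⟨i, j⟩ := x
  have hci := hc3 i
  have hjlt := j.isLt
  by_cases h0 : (j : ℕ) = 0
  · refine ⟨none, some ⟨i, ⟨1, by omega⟩⟩, ?_⟩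
    rintro (_ | ⟨i', j'⟩) hy
    · exact Or.inl rfl
    · obtain ⟨rfl, h | h⟩ := adj_some_iff.1 hy
      · right; simp only [Option.some.injEq, Sigma.mk.inj_iff, heq_eq_eq, Fin.ext_iff]
        exact ⟨trivial, by omega⟩
      · omega
  · by_cases h1 : (j : ℕ) = c i - 1
    · refine ⟨none, some ⟨i, ⟨(j : ℕ) - 1, by omega⟩⟩, ?_⟩
      rintro (_ | ⟨i', j'⟩) hy
      · exact Or.inl rfl
      · obtain ⟨rfl, h | h⟩ := adj_some_iff.1 hy
        · have := j'.isLt; omega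
        · right; simp only [Option.some.injEq, Sigma.mk.inj_iff, heq_eq_eq, Fin.ext_iff]
          exact ⟨trivial, by omega⟩
    · refine ⟨some ⟨i, ⟨(j : ℕ) - 1, by omega⟩⟩, some ⟨i, ⟨(j : ℕ) + 1, by omega⟩⟩, ?_⟩
      rintro (_ | ⟨i', j'⟩) hy
      · rcases adj_some_none hy with h | h <;> omega
      · obtain ⟨rfl, h | h⟩ := adj_some_iff.1 hy
        · right; simp only [Option.some.injEq, Sigma.mk.inj_iff, heq_eq_eq, Fin.ext_iff]
          exact ⟨trivial, by omega⟩
        · left; simp only [Option.some.injEq, Sigma.mk.inj_iff, heq_eq_eq, Fin.ext_iff]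
          exact ⟨trivial, by omega⟩

section Scheme
variable {τ : Option ((i : Fin k) × Fin (c i)) → ℕ}
  {par : Option ((i : Fin k) × Fin (c i)) → Option ((i : Fin k) × Fin (c i))}
  (hc3 : ∀ i, 3 ≤ c i)
  (hs : IsBroadcastScheme (kCycleGraph c) none τ par)

include hc3 hs

lemma uniqueChild (x : (i : Fin k) × Fin (c i))
    {v w : Option ((i : Fin k) × Fin (c i))} (hv : v ≠ none) (hw : w ≠ none)
    (hpv : par v = some x) (hpw : par w = some x) : v = w := by
  obtain ⟨A, B, hAB⟩ := nbrs hc3 x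
  obtain ⟨-, hP, -⟩ := hs
  have hxv := hP v hv
  have hxw := hP w hw
  rw [hpv] at hxv
  rw [hpw] at hxw
  have hx := hP (some x) (by simp)
  have hpxv : par (some x) ≠ v := by
    intro h; rw [h] at hx; omega
  have hpxw : par (some x) ≠ w := by
    intro h; rw [h] at hx; omega
  have h1 := hAB v hxv.1
  have h2 := hAB w hxw.1
  have h3 := hAB (par (some x)) hx.1.symm
  rcases h3 with h3 | h3 <;> rcases h1 with h1 | h1 <;> rcases h2 with h2 | h2 <;>
    first
      | (exact h1.trans h2.symm)
      | (exact absurd (h3.trans h1.symm) hpxv)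
      | (exact absurd (h3.trans h2.symm) hpxw)

end Scheme

def ancF {S : Type*} (par : Option S → Option S) : ℕ → S → S
  | 0, v => v
  | n+1, v =>
    match par (some v) with
    | none => v
    | some w => ancF par n w

def depF {S : Type*} (par : Option S → Option S) : ℕ → S → ℕ
  | 0, _ => 0
  | n+1, v =>
    match par (some v) with
    | none => 0
    | some w => depF par n w + 1

section Scheme2
variable {τ : Option ((i : Fin k) × Fin (c i)) → ℕ}
  {par : Option ((i : Fin k) × Fin (c i)) → Option ((i : Fin k) × Fin (c i))}
  (hc3 : ∀ i, 3 ≤ c i)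
  (hs : IsBroadcastScheme (kCycleGraph c) none τ par)

include hc3 hs

lemma tau_pos (v : (i : Fin k) × Fin (c i)) : 1 ≤ τ (some v) := by
  have := hs.2.1 (some v) (by simp)
  omega

lemma ancF_spec : ∀ n, ∀ v : (i : Fin k) × Fin (c i), τ (some v) ≤ n →
    (par (some (ancF par n v)) = none ∧ (ancF par n v).1 = v.1 ∧
      τ (some (ancF par n v)) + depF par n v ≤ τ (some v)) ∧
    (∀ w, τ (some w) ≤ n → ancF par n w = ancF par n v →
      depF par n w = depF par n v → w = v) := by
  intro n
  induction n with
  | zero => intro v hv; exact absurd (tau_pos hc3 hs v) (by omega)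
  | succ n ih =>
    intro v hv
    have hP := hs.2.1
    constructor
    · rcases hpv : par (some v) with _ | v'
      · simp only [ancF, depF, hpv]
        exact ⟨trivial, trivial, by omega⟩
      · have hv' := hP (some v) (by simp)
        rw [hpv] at hv'
        have hfst : v'.1 = v.1 := by
          obtain ⟨i, j⟩ := v'; obtain ⟨i', j'⟩ := v
          exact (adj_some_iff.1 hv'.1).1
        have hτ : τ (some v') ≤ n := by omega
        obtain ⟨⟨ha, hb, hd⟩, -⟩ := ih v' hτ
        simp only [ancF, depF, hpv]
        exact ⟨ha, hb.trans hfst, by omega⟩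
    · intro w hw hanc hdep
      rcases hpv : par (some v) with _ | v' <;> rcases hpw : par (some w) with _ | w'
      · -- both roots
        simp only [ancF, hpv, hpw] at hanc
        exact hanc
      · simp only [depF, hpv, hpw] at hdep
        exact absurd hdep (Nat.succ_ne_zero _)
      · simp only [depF, hpv, hpw] at hdep
        exact absurd hdep.symm (Nat.succ_ne_zero _)
      · have hv' := hP (some v) (by simp); rw [hpv] at hv'
        have hw' := hP (some w) (by simp); rw [hpw] at hw'
        simp only [ancF, depF, hpv, hpw] at hanc hdep
        have hτv : τ (some v') ≤ n := by omega
        have hτw : τ (some w') ≤ n := by omega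
        have : w' = v' := (ih v' hτv).2 w' hτw hanc (by omega)
        subst this
        have := uniqueChild hc3 hs w' (v := some w) (w := some v) (by simp) (by simp)
          hpw hpv
        exact Option.some_injective _ this
  end Scheme2

lemma gauss_refl (n : ℕ) : ∑ t ∈ Finset.Icc 1 n, (n + 1 - t) = ∑ t ∈ Finset.Icc 1 n, t := by
  apply Finset.sum_nbij' (i := fun t => n + 1 - t) (j := fun t => n + 1 - t) <;>
    intros <;> simp_all [Finset.mem_Icc] <;> omega

lemma gauss_icc (m : ℕ) : ∑ t ∈ Finset.Icc 1 (2*m), (2*m + 1 - t) = m * (2*m+1) := by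
  rw [gauss_refl]
  have h := Finset.sum_range_id_mul_two (2*m+1)
  have h2 : ∑ t ∈ Finset.range (2*m+1), t = ∑ t ∈ Finset.Icc 1 (2*m), t := by
    have : Finset.range (2*m+1) = insert 0 (Finset.Icc 1 (2*m)) := by
      ext t; simp [Finset.mem_Icc]; omega
    rw [this, Finset.sum_insert (by simp)]
    omega
  have h3 : (2*m+1)*(2*m+1-1) = (m*(2*m+1))*2 := by
    rw [Nat.add_sub_cancel]; ring
  omega

lemma forward (m : ℕ) (hm : 1 ≤ m) (c : Fin m → ℕ)
    (hodd : ∀ i, Odd (c i)) (hc3 : ∀ i, 3 ≤ c i)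
    (hsum : ∑ i, c i = m * (2 * m + 1))
    (τ : Option ((i : Fin m) × Fin (c i)) → ℕ)
    (par : Option ((i : Fin m) × Fin (c i)) → Option ((i : Fin m) × Fin (c i)))
    (hs : IsBroadcastScheme (kCycleGraph c) none τ par) (hb : ∀ v, τ v ≤ 2 * m) :
    ∃ α β : Fin m → ℕ,
        Set.BijOn α Set.univ {x | Even x ∧ x ∈ Set.Icc 1 (2 * m)} ∧
        Set.BijOn β Set.univ {x | Odd x ∧ x ∈ Set.Icc 1 (2 * m)} ∧
        ∀ i, α i + β i = c i := by
  classical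
  have spec := ancF_spec hc3 hs (2*m)
  set A : ((i : Fin m) × Fin (c i)) → ((i : Fin m) × Fin (c i)) := fun v => ancF par (2*m) v with hA
  set D : ((i : Fin m) × Fin (c i)) → ℕ := fun v => depF par (2*m) v with hD
  have hbv : ∀ v : (i : Fin m) × Fin (c i), τ (some v) ≤ 2*m := fun v => hb (some v)
  have specv : ∀ v : (i : Fin m) × Fin (c i), par (some (A v)) = none ∧ (A v).1 = v.1 ∧
      τ (some (A v)) + D v ≤ τ (some v) := fun v => (spec v (hbv v)).1
  have specInj : ∀ v w : (i : Fin m) × Fin (c i), A w = A v → D w = D v → w = v :=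
    fun v w h1 h2 => (spec v (hbv v)).2 w (hbv w) h1 h2
  set C : Finset ((i : Fin m) × Fin (c i)) := Finset.univ.image A with hC
  have hCroot : ∀ a ∈ C, par (some a) = none := by
    intro a ha
    obtain ⟨v, -, rfl⟩ := Finset.mem_image.1 ha
    exact (specv v).1
  have hτ1 : ∀ a ∈ C, 1 ≤ τ (some a) := fun a _ => tau_pos hc3 hs a
  -- fibers
  set fib : ((i : Fin m) × Fin (c i)) → Finset ((i : Fin m) × Fin (c i)) := fun a => Finset.univ.filter (fun v => A v = a) with hfib
  have fib_card_le : ∀ a ∈ C, (fib a).card ≤ 2*m + 1 - τ (some a) := by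
    intro a ha
    have : (fib a).card ≤ (Finset.range (2*m + 1 - τ (some a))).card := by
      apply Finset.card_le_card_of_injOn D
      · intro v hv
        simp only [hfib, Finset.mem_coe, Finset.mem_filter] at hv
        have h1 := (specv v).2.2
        rw [hv.2] at h1
        have := hbv v
        simp only [Finset.mem_coe, Finset.mem_range]
        have := hτ1 a ha
        omega
      · intro v hv w hw hvw
        simp only [hfib, Finset.mem_filter, Finset.coe_filter] at hv hw
        exact specInj w v (by rw [hv.2, hw.2]) hvw
    simpa using this
  have total : (Finset.univ : Finset ((i : Fin m) × Fin (c i))).card = ∑ a ∈ C, (fib a).card := by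
    apply Finset.card_eq_sum_card_fiberwise
    intro v _
    exact Finset.mem_image_of_mem A (Finset.mem_univ v)
  have cardS : (Finset.univ : Finset ((i : Fin m) × Fin (c i))).card = m * (2*m+1) := by
    rw [Finset.card_univ, Fintype.card_sigma]
    simpa using hsum
  have τinjC : ∀ a ∈ C, ∀ b ∈ C, τ (some a) = τ (some b) → a = b := by
    intro a ha b hb hab
    have := hs.2.2 none (Set.mem_setOf.2 ⟨by simp, hCroot a ha⟩)
      (Set.mem_setOf.2 ⟨by simp, hCroot b hb⟩) hab
    exact Option.some_injective _ this
  set T : Finset ℕ := C.image (fun a => τ (some a)) with hT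
  have sum2 : ∑ t ∈ T, (2*m+1 - t) = ∑ a ∈ C, (2*m + 1 - τ (some a)) :=
    Finset.sum_image fun a ha b hb h => τinjC a ha b hb h
  have hTsub : T ⊆ Finset.Icc 1 (2*m) := by
    intro t ht
    obtain ⟨a, ha, rfl⟩ := Finset.mem_image.1 ht
    exact Finset.mem_Icc.2 ⟨hτ1 a ha, hbv a⟩
  -- equality chain
  have chain1 : ∑ a ∈ C, (fib a).card ≤ ∑ a ∈ C, (2*m + 1 - τ (some a)) :=
    Finset.sum_le_sum fib_card_le
  have chain2 : ∑ t ∈ T, (2*m+1 - t) ≤ ∑ t ∈ Finset.Icc 1 (2*m), (2*m+1 - t) :=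
    Finset.sum_le_sum_of_subset hTsub
  have hgauss := gauss_icc m
  have keyEq : ∑ a ∈ C, (fib a).card = ∑ a ∈ C, (2*m + 1 - τ (some a)) ∧
      T = Finset.Icc 1 (2*m) := by
    constructor
    · omega
    · by_contra hne
      have hss : T ⊂ Finset.Icc 1 (2*m) := ⟨hTsub, fun h => hne (Finset.Subset.antisymm hTsub h)⟩
      obtain ⟨t, htI, htT⟩ := Finset.exists_of_ssubset hss
      have : ∑ s ∈ T, (2*m+1 - s) < ∑ s ∈ Finset.Icc 1 (2*m), (2*m+1 - s) := by
        apply Finset.sum_lt_sum_of_subset hTsub htI htT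
        · simp only [Finset.mem_Icc] at htI; omega
        · intro j _ _; exact Nat.zero_le _
      omega
  obtain ⟨fibEq', hTeq⟩ := keyEq
  have fibEq : ∀ a ∈ C, (fib a).card = 2*m + 1 - τ (some a) :=
    fun a ha => (Finset.sum_eq_sum_iff_of_le fib_card_le).1 fibEq' a ha
  -- the ends
  set aE : Fin m → ((i : Fin m) × Fin (c i)) :=
    fun i => ⟨i, ⟨0, by have := hc3 i; omega⟩⟩ with haE
  set bE : Fin m → ((i : Fin m) × Fin (c i)) :=
    fun i => ⟨i, ⟨c i - 1, by have := hc3 i; omega⟩⟩ with hbE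
  set Ends : Finset ((i : Fin m) × Fin (c i)) :=
    Finset.univ.image aE ∪ Finset.univ.image bE with hEnds
  have hCE : C ⊆ Ends := by
    intro a ha
    have hroot := hCroot a ha
    have hadj := (hs.2.1 (some a) (by simp)).1
    rw [hroot] at hadj
    obtain ⟨i, j⟩ := a
    rcases adj_none_some hadj with h | h
    · apply Finset.mem_union_left
      apply Finset.mem_image.2 ⟨i, Finset.mem_univ i, ?_⟩
      simp only [haE, Sigma.mk.inj_iff, heq_eq_eq, Fin.ext_iff]
      exact ⟨trivial, by omega⟩
    · apply Finset.mem_union_right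
      apply Finset.mem_image.2 ⟨i, Finset.mem_univ i, ?_⟩
      simp only [hbE, Sigma.mk.inj_iff, heq_eq_eq, Fin.ext_iff]
      exact ⟨trivial, by omega⟩
  have cardC : C.card = 2*m := by
    have h1 : T.card = C.card :=
      Finset.card_image_of_injOn (fun a ha b hb h => τinjC a ha b hb h)
    rw [hTeq] at h1
    simpa using h1.symm
  have hEC : Ends = C := by
    apply (Finset.eq_of_subset_of_card_le hCE ?_).symm
    calc Ends.card ≤ (Finset.univ.image aE).card + (Finset.univ.image bE).card :=
          Finset.card_union_le _ _
    _ ≤ m + m := by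
        gcongr <;> simpa using Finset.card_image_le.trans (by simp)
    _ = C.card := by omega
  have haC : ∀ i, aE i ∈ C := fun i => by
    rw [← hEC]; exact Finset.mem_union_left _ (Finset.mem_image_of_mem _ (Finset.mem_univ i))
  have hbC : ∀ i, bE i ∈ C := fun i => by
    rw [← hEC]; exact Finset.mem_union_right _ (Finset.mem_image_of_mem _ (Finset.mem_univ i))
  have habE : ∀ i, aE i ≠ bE i := by
    intro i h
    have := hc3 i
    simp only [haE, hbE, Sigma.mk.inj_iff, heq_eq_eq, Fin.ext_iff] at h
    omega
  -- cycle decomposition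
  have cyc_split : ∀ i : Fin m, (2*m + 1 - τ (some (aE i))) + (2*m + 1 - τ (some (bE i))) = c i := by
    intro i
    have hcard : (Finset.univ.filter (fun v : (i : Fin m) × Fin (c i) => v.1 = i)).card = c i := by
      have himg : Finset.univ.filter (fun v : (i : Fin m) × Fin (c i) => v.1 = i) =
          Finset.univ.image (fun j : Fin (c i) => (⟨i, j⟩ : (i : Fin m) × Fin (c i))) := by
        ext ⟨i', j'⟩
        simp only [Finset.mem_filter, Finset.mem_univ, true_and, Finset.mem_image]
        constructor
        · rintro rfl; exact ⟨j', rfl⟩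
        · rintro ⟨j, hj⟩
          obtain ⟨h1, -⟩ := Sigma.mk.inj_iff.1 hj
          exact h1.symm
      rw [himg, Finset.card_image_of_injective _ (fun j j' h => by
        simpa [Sigma.mk.inj_iff, Fin.ext_iff] using (Sigma.mk.inj_iff.1 h).2), Finset.card_univ,
        Fintype.card_fin]
    have hsplit : Finset.univ.filter (fun v : (i : Fin m) × Fin (c i) => v.1 = i) =
        fib (aE i) ∪ fib (bE i) := by
      ext v
      simp only [Finset.mem_filter, Finset.mem_univ, true_and, Finset.mem_union, hfib]
      constructor
      · intro hv
        have hAC : A v ∈ C := Finset.mem_image_of_mem A (Finset.mem_univ v)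
        rw [← hEC] at hAC
        have hfst : (A v).1 = i := (specv v).2.1.trans hv
        rcases Finset.mem_union.1 hAC with h | h <;> obtain ⟨i', -, hi'⟩ := Finset.mem_image.1 h
        · left
          rw [← hi'] at hfst ⊢
          simp only [haE] at hfst ⊢
          subst hfst; rfl
        · right
          rw [← hi'] at hfst ⊢
          simp only [hbE] at hfst ⊢
          subst hfst; rfl
      · rintro (h | h) <;> rw [← (specv v).2.1, h] <;> simp [haE, hbE]
    have hdisj : Disjoint (fib (aE i)) (fib (bE i)) := by
      rw [Finset.disjoint_left]
      intro v hv hw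
      simp only [hfib, Finset.mem_filter] at hv hw
      exact habE i (hv.2 ▸ hw.2)
    have := Finset.card_union_of_disjoint hdisj
    rw [← hsplit, hcard] at this
    rw [← fibEq _ (haC i), ← fibEq _ (hbC i), ← this]
  -- define α and β
  have hboundA : ∀ i, 1 ≤ τ (some (aE i)) ∧ τ (some (aE i)) ≤ 2*m :=
    fun i => ⟨hτ1 _ (haC i), hbv _⟩
  have hboundB : ∀ i, 1 ≤ τ (some (bE i)) ∧ τ (some (bE i)) ≤ 2*m :=
    fun i => ⟨hτ1 _ (hbC i), hbv _⟩
  have hoddc : ∀ i, c i % 2 = 1 := fun i => Nat.odd_iff.1 (hodd i)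
  set Av : Fin m → ℕ := fun i => 2*m + 1 - τ (some (aE i)) with hAv
  set Bv : Fin m → ℕ := fun i => 2*m + 1 - τ (some (bE i)) with hBv
  refine ⟨fun i => if Av i % 2 = 0 then Av i else Bv i,
          fun i => if Av i % 2 = 0 then Bv i else Av i, ?_, ?_, ?_⟩
  · refine ⟨?_, ?_, ?_⟩
    · intro i _
      have h1 := hboundA i; have h2 := hboundB i
      have h3 := cyc_split i; have h4 := hoddc i
      show Even _ ∧ _ ∈ Set.Icc 1 (2*m)
      rw [Nat.even_iff, Set.mem_Icc]
      beta_reduce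
      by_cases h : Av i % 2 = 0
      · rw [if_pos h]; simp only [hAv] at *; omega
      · rw [if_neg h]; simp only [hAv, hBv] at *; omega
    · intro i1 _ i2 _ h
      have key : ∀ i : Fin m, ∃ e, e ∈ C ∧ e.1 = i ∧
          (if Av i % 2 = 0 then Av i else Bv i) = 2*m + 1 - τ (some e) := by
        intro i
        by_cases hcase : Av i % 2 = 0
        · exact ⟨aE i, haC i, rfl, by rw [if_pos hcase]⟩
        · exact ⟨bE i, hbC i, rfl, by rw [if_neg hcase]⟩
      obtain ⟨e1, he1C, he1f, he1⟩ := key i1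
      obtain ⟨e2, he2C, he2f, he2⟩ := key i2
      have hb1 := hbv e1; have hb2 := hbv e2
      have ht1 := hτ1 _ he1C; have ht2 := hτ1 _ he2C
      have h' : (if Av i1 % 2 = 0 then Av i1 else Bv i1)
          = (if Av i2 % 2 = 0 then Av i2 else Bv i2) := h
      have : τ (some e1) = τ (some e2) := by omega
      have := τinjC e1 he1C e2 he2C this
      rw [← he1f, ← he2f, this]
    · intro x hx
      simp only [Set.mem_setOf_eq, Set.mem_Icc, Nat.even_iff] at hx
      obtain ⟨hxe, hx1, hx2⟩ := hx
      have htT : 2*m + 1 - x ∈ T := by rw [hTeq]; exact Finset.mem_Icc.2 ⟨by omega, by omega⟩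
      obtain ⟨a, haC', hat⟩ := Finset.mem_image.1 htT
      rw [← hEC] at haC'
      rcases Finset.mem_union.1 haC' with h | h <;> obtain ⟨i, -, hi⟩ := Finset.mem_image.1 h
      · refine ⟨i, Set.mem_univ i, ?_⟩
        have hAvx : Av i = x := by
          simp only [hAv]; rw [hi, hat]; omega
        show (if Av i % 2 = 0 then Av i else Bv i) = x
        rw [if_pos (by omega : Av i % 2 = 0), hAvx]
      · refine ⟨i, Set.mem_univ i, ?_⟩
        have hBvx : Bv i = x := by
          simp only [hBv]; rw [hi, hat]; omega
        have h3 := cyc_split i; have h4 := hoddc i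
        show (if Av i % 2 = 0 then Av i else Bv i) = x
        rw [if_neg (by simp only [hAv, hBv] at *; omega : ¬ Av i % 2 = 0), hBvx]
  · refine ⟨?_, ?_, ?_⟩
    · intro i _
      have h1 := hboundA i; have h2 := hboundB i
      have h3 := cyc_split i; have h4 := hoddc i
      show Odd _ ∧ _ ∈ Set.Icc 1 (2*m)
      rw [Nat.odd_iff, Set.mem_Icc]
      beta_reduce
      by_cases h : Av i % 2 = 0
      · rw [if_pos h]; simp only [hAv, hBv] at *; omega
      · rw [if_neg h]; simp only [hAv, hBv] at *; omega
    · intro i1 _ i2 _ h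
      have key : ∀ i : Fin m, ∃ e, e ∈ C ∧ e.1 = i ∧
          (if Av i % 2 = 0 then Bv i else Av i) = 2*m + 1 - τ (some e) := by
        intro i
        by_cases hcase : Av i % 2 = 0
        · exact ⟨bE i, hbC i, rfl, by rw [if_pos hcase]⟩
        · exact ⟨aE i, haC i, rfl, by rw [if_neg hcase]⟩
      obtain ⟨e1, he1C, he1f, he1⟩ := key i1
      obtain ⟨e2, he2C, he2f, he2⟩ := key i2
      have hb1 := hbv e1; have hb2 := hbv e2
      have ht1 := hτ1 _ he1C; have ht2 := hτ1 _ he2C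
      have h' : (if Av i1 % 2 = 0 then Bv i1 else Av i1)
          = (if Av i2 % 2 = 0 then Bv i2 else Av i2) := h
      have : τ (some e1) = τ (some e2) := by omega
      have := τinjC e1 he1C e2 he2C this
      rw [← he1f, ← he2f, this]
    · intro x hx
      simp only [Set.mem_setOf_eq, Set.mem_Icc, Nat.odd_iff] at hx
      obtain ⟨hxe, hx1, hx2⟩ := hx
      have htT : 2*m + 1 - x ∈ T := by rw [hTeq]; exact Finset.mem_Icc.2 ⟨by omega, by omega⟩
      obtain ⟨a, haC', hat⟩ := Finset.mem_image.1 htT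
      rw [← hEC] at haC'
      rcases Finset.mem_union.1 haC' with h | h <;> obtain ⟨i, -, hi⟩ := Finset.mem_image.1 h
      · refine ⟨i, Set.mem_univ i, ?_⟩
        have hAvx : Av i = x := by
          simp only [hAv]; rw [hi, hat]; omega
        show (if Av i % 2 = 0 then Bv i else Av i) = x
        rw [if_neg (by omega : ¬ Av i % 2 = 0), hAvx]
      · refine ⟨i, Set.mem_univ i, ?_⟩
        have hBvx : Bv i = x := by
          simp only [hBv]; rw [hi, hat]; omega
        have h3 := cyc_split i; have h4 := hoddc i
        show (if Av i % 2 = 0 then Bv i else Av i) = x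
        rw [if_pos (by simp only [hAv, hBv] at *; omega : Av i % 2 = 0), hBvx]
  · intro i
    have h3 := cyc_split i
    show (if Av i % 2 = 0 then Av i else Bv i) + (if Av i % 2 = 0 then Bv i else Av i) = c i
    by_cases h : Av i % 2 = 0
    · rw [if_pos h, if_pos h]; simp only [hAv, hBv] at *; omega
    · rw [if_neg h, if_neg h]; simp only [hAv, hBv] at *; omega

def tauC (m : ℕ) {k : ℕ} (c α β : Fin k → ℕ) : Option ((i : Fin k) × Fin (c i)) → ℕ
  | none => 0
  | some ⟨i, j⟩ =>
    if (j : ℕ) < α i then 2*m + 1 - α i + j else 2*m + 1 - β i + (c i - 1 - (j : ℕ))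

def parC {k : ℕ} (c α : Fin k → ℕ) :
    Option ((i : Fin k) × Fin (c i)) → Option ((i : Fin k) × Fin (c i))
  | none => none
  | some ⟨i, j⟩ =>
    if (j : ℕ) < α i then
      (if (j : ℕ) = 0 then none
       else some ⟨i, ⟨(j : ℕ) - 1, Nat.lt_of_le_of_lt (Nat.sub_le _ _) j.isLt⟩⟩)
    else
      (if h : (j : ℕ) = c i - 1 then none
       else some ⟨i, ⟨(j : ℕ) + 1, by have := j.isLt; omega⟩⟩)

lemma backward (m : ℕ) (hm : 1 ≤ m) (c : Fin m → ℕ)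
    (hodd : ∀ i, Odd (c i)) (hc3 : ∀ i, 3 ≤ c i)
    (α β : Fin m → ℕ)
    (hα : Set.BijOn α Set.univ {x | Even x ∧ x ∈ Set.Icc 1 (2 * m)})
    (hβ : Set.BijOn β Set.univ {x | Odd x ∧ x ∈ Set.Icc 1 (2 * m)})
    (hab : ∀ i, α i + β i = c i) :
    ∃ (τ : Option ((i : Fin m) × Fin (c i)) → ℕ)
       (par : Option ((i : Fin m) × Fin (c i)) → Option ((i : Fin m) × Fin (c i))),
        IsBroadcastScheme (kCycleGraph c) none τ par ∧ ∀ v, τ v ≤ 2 * m := by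
  classical
  have hαf : ∀ i, α i % 2 = 0 ∧ 1 ≤ α i ∧ α i ≤ 2*m := by
    intro i
    have := hα.mapsTo (Set.mem_univ i)
    simp only [Set.mem_setOf_eq, Set.mem_Icc, Nat.even_iff] at this
    exact ⟨this.1, this.2.1, this.2.2⟩
  have hβf : ∀ i, β i % 2 = 1 ∧ 1 ≤ β i ∧ β i ≤ 2*m := by
    intro i
    have := hβ.mapsTo (Set.mem_univ i)
    simp only [Set.mem_setOf_eq, Set.mem_Icc, Nat.odd_iff] at this
    exact ⟨this.1, this.2.1, this.2.2⟩
  refine ⟨tauC m c α β, parC c α, ⟨rfl, ?_, ?_⟩, ?_⟩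
  · -- parent conditions
    rintro (_ | ⟨i, j⟩) hv
    · exact absurd rfl hv
    have hα1 := hαf i; have hβ1 := hβf i; have hci := hc3 i; have hab1 := hab i
    have hj := j.isLt
    by_cases h1 : (j : ℕ) < α i
    · by_cases h0 : (j : ℕ) = 0
      · simp only [parC, tauC, if_pos h1, if_pos h0]
        exact ⟨adj_none_iff.2 (Or.inl h0), by omega⟩
      · simp only [parC, tauC, if_pos h1, if_neg h0]
        constructor
        · exact adj_some_iff.2 ⟨rfl, Or.inl (by simp only [Fin.val_mk]; omega)⟩
        · rw [if_pos (show (j:ℕ) - 1 < α i by omega)]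
          omega
    · by_cases hl : (j : ℕ) = c i - 1
      · simp only [parC, tauC, if_neg h1, dif_pos hl]
        exact ⟨adj_none_iff.2 (Or.inr hl), by omega⟩
      · simp only [parC, tauC, if_neg h1, dif_neg hl]
        constructor
        · exact adj_some_iff.2 ⟨rfl, Or.inr (by simp only [Fin.val_mk])⟩
        · rw [if_neg (show ¬ ((j:ℕ) + 1 < α i) by omega)]
          omega
  · -- injectivity
    rintro (_ | ⟨i, j⟩)
    · -- children of the center
      rintro (_ | ⟨i1, j1⟩) ⟨hx1, hx2⟩ (_ | ⟨i2, j2⟩) ⟨hy1, hy2⟩ hxy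
      · exact absurd rfl hx1
      · exact absurd rfl hx1
      · exact absurd rfl hy1
      have hα1 := hαf i1; have hβ1 := hβf i1; have hc1 := hc3 i1; have hab1 := hab i1
      have hα2 := hαf i2; have hβ2 := hβf i2; have hc2 := hc3 i2; have hab2 := hab i2
      have hj1 := j1.isLt; have hj2 := j2.isLt
      have hend1 : (j1 : ℕ) = 0 ∨ (j1 : ℕ) = c i1 - 1 := by
        by_contra hcon
        push_neg at hcon
        simp only [parC] at hx2
        by_cases h1 : (j1 : ℕ) < α i1
        · rw [if_pos h1, if_neg hcon.1] at hx2; exact Option.some_ne_none _ hx2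
        · rw [if_neg h1, dif_neg hcon.2] at hx2; exact Option.some_ne_none _ hx2
      have hend2 : (j2 : ℕ) = 0 ∨ (j2 : ℕ) = c i2 - 1 := by
        by_contra hcon
        push_neg at hcon
        simp only [parC] at hy2
        by_cases h1 : (j2 : ℕ) < α i2
        · rw [if_pos h1, if_neg hcon.1] at hy2; exact Option.some_ne_none _ hy2
        · rw [if_neg h1, dif_neg hcon.2] at hy2; exact Option.some_ne_none _ hy2
      have ht1 : tauC m c α β (some ⟨i1, j1⟩) =
          if (j1 : ℕ) = 0 then 2*m + 1 - α i1 else 2*m + 1 - β i1 := by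
        rcases hend1 with h | h
        · simp only [tauC]
          rw [if_pos (show (j1:ℕ) < α i1 by omega), if_pos h]
          omega
        · simp only [tauC]
          rw [if_neg (show ¬ ((j1:ℕ) < α i1) by omega), if_neg (show ¬ ((j1:ℕ) = 0) by omega)]
          omega
      have ht2 : tauC m c α β (some ⟨i2, j2⟩) =
          if (j2 : ℕ) = 0 then 2*m + 1 - α i2 else 2*m + 1 - β i2 := by
        rcases hend2 with h | h
        · simp only [tauC]
          rw [if_pos (show (j2:ℕ) < α i2 by omega), if_pos h]
          omega
        · simp only [tauC]
          rw [if_neg (show ¬ ((j2:ℕ) < α i2) by omega), if_neg (show ¬ ((j2:ℕ) = 0) by omega)]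
          omega
      rw [ht1, ht2] at hxy
      by_cases e1 : (j1 : ℕ) = 0 <;> by_cases e2 : (j2 : ℕ) = 0
      · rw [if_pos e1, if_pos e2] at hxy
        have : α i1 = α i2 := by omega
        have hii : i1 = i2 := hα.injOn (Set.mem_univ i1) (Set.mem_univ i2) this
        subst hii
        simp only [Option.some.injEq, Sigma.mk.inj_iff, heq_eq_eq, Fin.ext_iff]
        exact ⟨trivial, by omega⟩
      · rw [if_pos e1, if_neg e2] at hxy
        have : α i1 = β i2 := by omega
        omega
      · rw [if_neg e1, if_pos e2] at hxy
        have : β i1 = α i2 := by omega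
        omega
      · rw [if_neg e1, if_neg e2] at hxy
        have : β i1 = β i2 := by omega
        have hii : i1 = i2 := hβ.injOn (Set.mem_univ i1) (Set.mem_univ i2) this
        subst hii
        simp only [Option.some.injEq, Sigma.mk.inj_iff, heq_eq_eq, Fin.ext_iff]
        exact ⟨trivial, by omega⟩
    · -- children of a non-center vertex: at most one
      rintro (_ | ⟨i1, j1⟩) ⟨hx1, hx2⟩ (_ | ⟨i2, j2⟩) ⟨hy1, hy2⟩ hxy
      · exact absurd rfl hx1
      · exact absurd rfl hx1
      · exact absurd rfl hy1
      have key : ∀ (i' : Fin m) (j' : Fin (c i')),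
          parC c α (some ⟨i', j'⟩) = some ⟨i, j⟩ →
          i' = i ∧ (((j' : ℕ) = (j : ℕ) + 1 ∧ (j' : ℕ) < α i) ∨
            ((j' : ℕ) + 1 = (j : ℕ) ∧ α i ≤ (j' : ℕ))) := by
        intro i' j' hp
        simp only [parC] at hp
        by_cases h1 : (j' : ℕ) < α i'
        · rw [if_pos h1] at hp
          by_cases h0 : (j' : ℕ) = 0
          · rw [if_pos h0] at hp; exact absurd hp.symm (Option.some_ne_none _)
          · rw [if_neg h0] at hp
            obtain ⟨hfst, hsnd⟩ := Sigma.mk.inj_iff.1 (Option.some.inj hp)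
            subst hfst
            rw [heq_eq_eq, Fin.ext_iff] at hsnd
            simp only at hsnd
            exact ⟨rfl, Or.inl ⟨by omega, by omega⟩⟩
        · rw [if_neg h1] at hp
          by_cases hl : (j' : ℕ) = c i' - 1
          · rw [dif_pos hl] at hp; exact absurd hp.symm (Option.some_ne_none _)
          · rw [dif_neg hl] at hp
            obtain ⟨hfst, hsnd⟩ := Sigma.mk.inj_iff.1 (Option.some.inj hp)
            subst hfst
            rw [heq_eq_eq, Fin.ext_iff] at hsnd
            simp only at hsnd
            exact ⟨rfl, Or.inr ⟨by omega, by omega⟩⟩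
      obtain ⟨rfl, h1⟩ := key i1 j1 hx2
      obtain ⟨rfl, h2⟩ := key i2 j2 hy2
      simp only [Option.some.injEq, Sigma.mk.inj_iff, heq_eq_eq, Fin.ext_iff]
      rcases h1 with ⟨ha, hb'⟩ | ⟨ha, hb'⟩ <;> rcases h2 with ⟨hc', hd⟩ | ⟨hc', hd⟩ <;>
        exact ⟨trivial, by omega⟩
  · -- bound
    rintro (_ | ⟨i, j⟩)
    · simp [tauC]
    have hα1 := hαf i; have hβ1 := hβf i; have hci := hc3 i; have hab1 := hab i
    have hj := j.isLt
    simp only [tauC]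
    by_cases h1 : (j : ℕ) < α i
    · rw [if_pos h1]; omega
    · rw [if_neg h1]; omega

end Aux

/-- For odd `cᵢ ≥ 3` summing to `m(2m+1)`, the `m`-cycle graph
`G(c₁, …, c_m)` with source the center admits a broadcast scheme completing within
`2m` rounds iff there are bijections `α` from `{1, …, m}` onto the even numbers of
`{1, …, 2m}` and `β` onto the odd numbers of `{1, …, 2m}` with `α i + β i = cᵢ`. -/

theorem kCycle_broadcast_iff_evenOdd (m : ℕ) (hm : 1 ≤ m) (c : Fin m → ℕ)
    (hodd : ∀ i, Odd (c i)) (hc3 : ∀ i, 3 ≤ c i)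
    (hsum : ∑ i, c i = m * (2 * m + 1)) :
    (∃ (τ : Option ((i : Fin m) × Fin (c i)) → ℕ)
       (par : Option ((i : Fin m) × Fin (c i)) → Option ((i : Fin m) × Fin (c i))),
        IsBroadcastScheme (kCycleGraph c) none τ par ∧ ∀ v, τ v ≤ 2 * m) ↔
    (∃ α β : Fin m → ℕ,
        Set.BijOn α Set.univ {x | Even x ∧ x ∈ Set.Icc 1 (2 * m)} ∧
        Set.BijOn β Set.univ {x | Odd x ∧ x ∈ Set.Icc 1 (2 * m)} ∧
        ∀ i, α i + β i = c i) := by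
  constructor
  · rintro ⟨τ, par, hs, hb⟩
    exact forward m hm c hodd hc3 hsum τ par hs hb
  · rintro ⟨α, β, hα, hβ, hab⟩
    exact backward m hm c hodd hc3 α β hα hβ hab
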